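/- Let k > 0 with k ∉ {i²j²π⁴ : i, j integers, 1 ≤ i < j}, and let β < −β_c(k). Then the set of solutions of the stationary beam problem with f = 0 is exactly {0} ∪ {u_n^+, u_n^− : n ≥ 1 with β + μ_n(k) < 0}, where u_n^±(x) = ±(1/(nπ))·√(−2(β + μ_n(k)))·sin(nπx). In particular, the stationary problem has exactly 2·n⋆(β) + 1 solutions, where n⋆(β) is the (finite) number of integers n ≥ 1 with β + μ_n(k) < 0. -/

import Mathlib

open Real Set

/-- `μ_n(k) = k/(n²π²) + n²π²`. -/
noncomputable def mu (k : ℝ) (n : ℕ) : ℝ := k / ((n : ℝ)^2 * π^2) + (n : ℝ)^2 * π^2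

/-- `β_c(k) = min_{n ≥ 1} μ_n(k)`. -/
noncomputable def betaC (k : ℝ) : ℝ := sInf {x : ℝ | ∃ n : ℕ, 1 ≤ n ∧ x = mu k n}

/-- `u` is a solution of the stationary beam problem with `f = 0`:
`u ∈ C⁴([0,1])`, `u'''' - (β + ∫₀¹ u'(ξ)² dξ) u'' + k u = 0` on `[0,1]`,
with hinged boundary conditions. -/
def IsStatSol (k β : ℝ) (u : ℝ → ℝ) : Prop :=
  ContDiffOn ℝ 4 u (Icc (0:ℝ) 1) ∧
  (∀ x ∈ Icc (0:ℝ) 1,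
    iteratedDerivWithin 4 u (Icc (0:ℝ) 1) x
      - (β + ∫ ξ in (0:ℝ)..1, (iteratedDerivWithin 1 u (Icc (0:ℝ) 1) ξ)^2)
        * iteratedDerivWithin 2 u (Icc (0:ℝ) 1) x
      + k * u x = 0) ∧
  u 0 = 0 ∧ u 1 = 0 ∧
  iteratedDerivWithin 2 u (Icc (0:ℝ) 1) 0 = 0 ∧
  iteratedDerivWithin 2 u (Icc (0:ℝ) 1) 1 = 0

/-- The buckled mode `u_n^+`. -/
noncomputable def upos (k β : ℝ) (n : ℕ) : ℝ → ℝ :=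
  fun x => (1/((n : ℝ)*π)) * Real.sqrt (-2*(β + mu k n)) * Real.sin ((n : ℝ)*π*x)

/-- The buckled mode `u_n^-`. -/
noncomputable def uneg (k β : ℝ) (n : ℕ) : ℝ → ℝ :=
  fun x => -(1/((n : ℝ)*π)) * Real.sqrt (-2*(β + mu k n)) * Real.sin ((n : ℝ)*π*x)

lemma hda_cosh (σ : ℂ) (x : ℝ) :
    HasDerivAt (fun y : ℝ => Complex.cosh (σ * y)) (σ * Complex.sinh (σ * x)) x := by
  have : HasDerivAt (fun c : ℂ => Complex.cosh (σ * c)) (σ * Complex.sinh (σ * x)) (x : ℂ) := by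
    simpa [mul_comm] using ((hasDerivAt_id (x : ℂ)).const_mul σ).ccosh
  exact this.comp_ofReal

lemma hda_sinh (σ : ℂ) (x : ℝ) :
    HasDerivAt (fun y : ℝ => Complex.sinh (σ * y)) (σ * Complex.cosh (σ * x)) x := by
  have : HasDerivAt (fun c : ℂ => Complex.sinh (σ * c)) (σ * Complex.cosh (σ * x)) (x : ℂ) := by
    simpa [mul_comm] using ((hasDerivAt_id (x : ℂ)).const_mul σ).csinh
  exact this.comp_ofReal

/-- Representation of solutions of `w'' = σ² w` on `[0,1]`. -/
lemma ode2_rep (σ : ℂ) (hσ : σ ≠ 0) (w w1 : ℝ → ℂ)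
    (hw : ∀ x ∈ Icc (0:ℝ) 1, HasDerivWithinAt w (w1 x) (Icc (0:ℝ) 1) x)
    (hw1 : ∀ x ∈ Icc (0:ℝ) 1, HasDerivWithinAt w1 (σ^2 * w x) (Icc (0:ℝ) 1) x) :
    ∀ x ∈ Icc (0:ℝ) 1,
      w x = w 0 * Complex.cosh (σ * x) + (w1 0 / σ) * Complex.sinh (σ * x) := by
  set g : ℝ → ℂ := fun x => w 0 * Complex.cosh (σ * x) + (w1 0 / σ) * Complex.sinh (σ * x)
    with hg_def
  set g1 : ℝ → ℂ := fun x => (w 0 * σ) * Complex.sinh (σ * x) + w1 0 * Complex.cosh (σ * x)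
    with hg1_def
  have hg : ∀ x : ℝ, HasDerivAt g (g1 x) x := by
    intro x
    have h := ((hda_cosh σ x).const_mul (w 0)).add ((hda_sinh σ x).const_mul (w1 0 / σ))
    refine h.congr_deriv ?_
    simp only [hg1_def]
    field_simp
  have hg1 : ∀ x : ℝ, HasDerivAt g1 (σ^2 * g x) x := by
    intro x
    have h := ((hda_sinh σ x).const_mul (w 0 * σ)).add ((hda_cosh σ x).const_mul (w1 0))
    refine h.congr_deriv ?_
    simp only [hg_def]
    field_simp
  -- the ODE as a first-order system
  set L : (ℂ × ℂ) →L[ℝ] (ℂ × ℂ) :=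
    (ContinuousLinearMap.snd ℝ ℂ ℂ).prod ((σ^2) • ((ContinuousLinearMap.fst ℝ ℂ ℂ).restrictScalars ℝ)) with hL
  have hLap : ∀ p : ℂ × ℂ, L p = (p.2, σ^2 * p.1) := fun p => rfl
  set F : ℝ → ℂ × ℂ := fun x => (w x, w1 x) with hF
  set G : ℝ → ℂ × ℂ := fun x => (g x, g1 x) with hG
  have key : EqOn F G (Icc (0:ℝ) 1) := by
    apply ODE_solution_unique_of_mem_Icc_right
      (v := fun _ p => L p) (K := ‖L‖₊) (s := fun _ => (univ : Set (ℂ × ℂ)))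
      (fun _ _ => (L.lipschitz).lipschitzOnWith)
    · exact fun x hx => ((hw x hx).continuousWithinAt.prodMk (hw1 x hx).continuousWithinAt)
    · intro t ht
      have hmem : Icc (0:ℝ) 1 ∈ nhdsWithin t (Ici t) := Icc_mem_nhdsGE_of_mem ht
      have : HasDerivWithinAt F (w1 t, σ^2 * w t) (Icc (0:ℝ) 1) t :=
        (hw t (Ico_subset_Icc_self ht)).prodMk (hw1 t (Ico_subset_Icc_self ht))
      exact (this.mono_of_mem_nhdsWithin hmem)
    · exact fun _ _ => mem_univ _
    · exact fun x hx => ((hg x).continuousAt.continuousWithinAt.prodMk (hg1 x).continuousAt.continuousWithinAt)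
    · intro t ht
      exact (((hg t).prodMk (hg1 t)).hasDerivWithinAt)
    · exact fun _ _ => mem_univ _
    · -- initial condition
      have h0 : g 0 = w 0 := by simp [hg_def]
      have h1 : g1 0 = w1 0 := by
        simp only [hg1_def]
        push_cast
        rw [mul_zero, Complex.sinh_zero, Complex.cosh_zero]
        field_simp
        ring
      simp [hF, hG, h0, h1]
  intro x hx
  have := congrArg Prod.fst (key hx)
  simpa [hF, hG, hg_def] using this

lemma sinh_formula (m : ℕ) (A : ℂ) (x : ℝ) (s : ℂ)
    (hs : s = (m:ℂ)*π*Complex.I ∨ s = -((m:ℂ)*π*Complex.I)) (hm : 1 ≤ m) :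
    A / s * Complex.sinh (s * x) = A / ((m:ℂ)*π) * (Real.sin ((m:ℝ)*π*x) : ℂ) := by
  have hπ : (π:ℂ) ≠ 0 := Complex.ofReal_ne_zero.mpr Real.pi_ne_zero
  have hm0 : ((m:ℂ)) ≠ 0 := Nat.cast_ne_zero.mpr (by omega)
  have hI := Complex.I_ne_zero
  rcases hs with h | h <;> rw [h]
  · have harg : (m:ℂ)*π*Complex.I * x = (((m:ℝ)*π*x : ℝ):ℂ) * Complex.I := by push_cast; ring
    rw [harg, Complex.sinh_mul_I, ← Complex.ofReal_sin]
    field_simp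
  · have harg : -((m:ℂ)*π*Complex.I) * x = ((-((m:ℝ)*π*x) : ℝ):ℂ) * Complex.I := by push_cast; ring
    rw [harg, Complex.sinh_mul_I, ← Complex.ofReal_sin, Real.sin_neg]
    push_cast
    field_simp

/-- Classification of Dirichlet solutions of `w'' = lam * w` on `[0,1]`. -/
lemma ode2_dirichlet (lam σ : ℂ) (hσ2 : σ^2 = lam) (hσ : σ ≠ 0) (w w1 : ℝ → ℂ)
    (hw : ∀ x ∈ Icc (0:ℝ) 1, HasDerivWithinAt w (w1 x) (Icc (0:ℝ) 1) x)
    (hw1 : ∀ x ∈ Icc (0:ℝ) 1, HasDerivWithinAt w1 (lam * w x) (Icc (0:ℝ) 1) x)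
    (h0 : w 0 = 0) (h1 : w 1 = 0) :
    (∀ x ∈ Icc (0:ℝ) 1, w x = 0) ∨
    ∃ m : ℕ, 1 ≤ m ∧ lam = -((m:ℂ)^2 * (π:ℂ)^2) ∧ w1 0 ≠ 0 ∧
      ∀ x ∈ Icc (0:ℝ) 1, w x = (w1 0 / ((m:ℂ) * π)) * (Real.sin (m * π * x) : ℂ) := by
  have hrep := ode2_rep σ hσ w w1 hw (by simpa [hσ2] using hw1)
  simp only [h0, zero_mul, zero_add] at hrep
  by_cases hw10 : w1 0 = 0
  · left
    intro x hx
    rw [hrep x hx, hw10]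
    simp
  · right
    have hsinh : Complex.sinh σ = 0 := by
      have := hrep 1 (by norm_num)
      rw [h1] at this
      have h2 : (w1 0 / σ) * Complex.sinh (σ * (1:ℝ)) = 0 := this.symm
      rcases mul_eq_zero.mp h2 with h | h
      · exact absurd h (div_ne_zero hw10 hσ)
      · simpa using h
    -- σ = j * π * I for some integer j ≠ 0
    have hsin : Complex.sin (σ * (-Complex.I)) = 0 := by
      have : σ = (σ * (-Complex.I)) * Complex.I := by
        rw [mul_assoc]
        simp [Complex.I_mul_I]
      rw [this, Complex.sinh_mul_I] at hsinh
      rcases mul_eq_zero.mp hsinh with h | h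
      · exact h
      · exact absurd h Complex.I_ne_zero
    obtain ⟨j, hj⟩ := Complex.sin_eq_zero_iff.mp hsin
    have hσj : σ = (j:ℂ) * π * Complex.I := by
      have hs : σ = σ * -Complex.I * Complex.I := by
        rw [mul_assoc, neg_mul, Complex.I_mul_I]; ring
      rw [hs, hj]
    have hj0 : j ≠ 0 := by
      intro h
      rw [h] at hσj
      simp at hσj
      exact hσ hσj
    set m : ℕ := j.natAbs with hm
    have hm1 : 1 ≤ m := Nat.one_le_iff_ne_zero.mpr (Int.natAbs_ne_zero.mpr hj0)
    have hπ : (π:ℂ) ≠ 0 := Complex.ofReal_ne_zero.mpr (Real.pi_ne_zero)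
    have hσm : σ = (m:ℂ)*π*Complex.I ∨ σ = -((m:ℂ)*π*Complex.I) := by
      rcases Int.natAbs_eq j with h | h
      · left
        have hc : (j:ℂ) = (m:ℂ) := by rw [h]; norm_cast
        rw [hσj, hc]
      · right
        have hc : (j:ℂ) = -(m:ℂ) := by
          rw [h]; norm_cast; rw [hm, Int.abs_eq_natAbs]
        rw [hσj, hc]; ring
    have hlam : lam = -((m:ℂ)^2 * (π:ℂ)^2) := by
      rw [← hσ2]
      rcases hσm with h | h <;> rw [h]
      · rw [mul_pow, mul_pow, Complex.I_sq]; ring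
      · rw [neg_pow, mul_pow, mul_pow, Complex.I_sq]; ring
    refine ⟨m, hm1, hlam, hw10, ?_⟩
    intro x hx
    rw [hrep x hx]
    exact sinh_formula m (w1 0) x σ hσm hm1

lemma lift_hasDeriv {f g : ℝ → ℝ} {s : Set ℝ} (h : ∀ x ∈ s, HasDerivWithinAt f (g x) s x) :
    ∀ x ∈ s, HasDerivWithinAt (fun y => ((f y : ℝ) : ℂ)) ((g x : ℝ) : ℂ) s x := by
  intro x hx
  have := Complex.ofRealCLM.hasFDerivAt.comp_hasDerivWithinAt x (h x hx)
  exact this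

lemma mode_real (m : ℕ) (hm : 1 ≤ m) (u : ℝ → ℝ) (E : ℂ) (hE : E ≠ 0)
    (h : ∀ x ∈ Icc (0:ℝ) 1, ((u x : ℝ):ℂ) = E * (Real.sin ((m:ℝ)*π*x) : ℂ)) :
    ∃ c : ℝ, c ≠ 0 ∧ ∀ x ∈ Icc (0:ℝ) 1, u x = c * Real.sin ((m:ℝ)*π*x) := by
  have hm0 : (m:ℝ) ≠ 0 := Nat.cast_ne_zero.mpr (by omega)
  have hm0' : (0:ℝ) < m := by positivity
  set x₀ : ℝ := 1/(2*(m:ℝ)) with hx₀def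
  have hx₀ : x₀ ∈ Icc (0:ℝ) 1 := by
    constructor
    · positivity
    · rw [hx₀def, div_le_one (by positivity)]
      have : (1:ℝ) ≤ m := by exact_mod_cast hm
      linarith
  have hs : Real.sin ((m:ℝ)*π*x₀) = 1 := by
    have : (m:ℝ)*π*x₀ = π/2 := by rw [hx₀def]; field_simp
    rw [this, Real.sin_pi_div_two]
  have hEc : E = ((u x₀ : ℝ):ℂ) := by
    have := h x₀ hx₀
    rw [hs] at this
    simp at this
    rw [this]
  refine ⟨u x₀, fun hc => hE (by rw [hEc, hc]; simp), ?_⟩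
  intro x hx
  have := h x hx
  rw [hEc] at this
  exact_mod_cast this

/-- Main classification: any solution of `u'''' = q u'' - k u` with hinged BCs is
zero or a multiple of a sine mode. -/
lemma classify (k q : ℝ) (hk : 0 < k)
    (hres : ∀ i j : ℕ, 1 ≤ i → i < j → k ≠ (i : ℝ)^2 * (j : ℝ)^2 * π^4)
    (u u1 u2 u3 u4 : ℝ → ℝ)
    (hu : ∀ x ∈ Icc (0:ℝ) 1, HasDerivWithinAt u (u1 x) (Icc (0:ℝ) 1) x)
    (hu1 : ∀ x ∈ Icc (0:ℝ) 1, HasDerivWithinAt u1 (u2 x) (Icc (0:ℝ) 1) x)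
    (hu2 : ∀ x ∈ Icc (0:ℝ) 1, HasDerivWithinAt u2 (u3 x) (Icc (0:ℝ) 1) x)
    (hu3 : ∀ x ∈ Icc (0:ℝ) 1, HasDerivWithinAt u3 (u4 x) (Icc (0:ℝ) 1) x)
    (hode : ∀ x ∈ Icc (0:ℝ) 1, u4 x = q * u2 x - k * u x)
    (hb0 : u 0 = 0) (hb1 : u 1 = 0) (hb2 : u2 0 = 0) (hb3 : u2 1 = 0) :
    (∀ x ∈ Icc (0:ℝ) 1, u x = 0) ∨
    ∃ n : ℕ, 1 ≤ n ∧ q = -(k/((n:ℝ)^2*π^2) + (n:ℝ)^2*π^2) ∧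
      ∃ c : ℝ, c ≠ 0 ∧ ∀ x ∈ Icc (0:ℝ) 1, u x = c * Real.sin ((n:ℝ)*π*x) := by
  have hπ : (0:ℝ) < π := Real.pi_pos
  have hkC : (k:ℂ) ≠ 0 := Complex.ofReal_ne_zero.mpr (ne_of_gt hk)
  -- complexified functions
  set U : ℝ → ℂ := fun x => ((u x : ℝ):ℂ) with hU_def
  set U1 : ℝ → ℂ := fun x => ((u1 x : ℝ):ℂ) with hU1_def
  set U2 : ℝ → ℂ := fun x => ((u2 x : ℝ):ℂ) with hU2_def
  set U3 : ℝ → ℂ := fun x => ((u3 x : ℝ):ℂ) with hU3_def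
  set U4 : ℝ → ℂ := fun x => ((u4 x : ℝ):ℂ) with hU4_def
  have hU := lift_hasDeriv hu
  have hU1 := lift_hasDeriv hu1
  have hU2 := lift_hasDeriv hu2
  have hU3 := lift_hasDeriv hu3
  have hodeC : ∀ x ∈ Icc (0:ℝ) 1, U4 x = (q:ℂ) * U2 x - (k:ℂ) * U x := by
    intro x hx
    have := hode x hx
    simp only [hU4_def, hU2_def, hU_def]
    exact_mod_cast congrArg (fun t : ℝ => (t:ℂ)) this
  -- roots of the characteristic polynomial z² - q z + k
  obtain ⟨d, hd⟩ : ∃ d : ℂ, d^2 = (q:ℂ)^2 - 4*k := by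
    obtain ⟨z, hz⟩ := Complex.isAlgClosed.exists_pow_nat_eq ((q:ℂ)^2 - 4*k) two_pos
    exact ⟨z, hz⟩
  set l1 : ℂ := ((q:ℂ) + d)/2 with hl1_def
  set l2 : ℂ := ((q:ℂ) - d)/2 with hl2_def
  have hsum : l1 + l2 = (q:ℂ) := by rw [hl1_def, hl2_def]; ring
  have hprod : l1 * l2 = (k:ℂ) := by
    have : l1 * l2 = ((q:ℂ)^2 - d^2)/4 := by rw [hl1_def, hl2_def]; ring
    rw [this, hd]; ring
  have hl10 : l1 ≠ 0 := fun h => hkC (by rw [← hprod, h, zero_mul])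
  have hl20 : l2 ≠ 0 := fun h => hkC (by rw [← hprod, h, mul_zero])
  obtain ⟨s1, hs1⟩ : ∃ s : ℂ, s^2 = l1 := Complex.isAlgClosed.exists_pow_nat_eq l1 two_pos
  obtain ⟨s2, hs2⟩ : ∃ s : ℂ, s^2 = l2 := Complex.isAlgClosed.exists_pow_nat_eq l2 two_pos
  have hs10 : s1 ≠ 0 := fun h => hl10 (by rw [← hs1, h]; ring)
  have hs20 : s2 ≠ 0 := fun h => hl20 (by rw [← hs2, h]; ring)
  -- the two factor functions
  set wa : ℝ → ℂ := fun x => U2 x - l2 * U x with hwa_def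
  set wa1 : ℝ → ℂ := fun x => U3 x - l2 * U1 x with hwa1_def
  set wb : ℝ → ℂ := fun x => U2 x - l1 * U x with hwb_def
  set wb1 : ℝ → ℂ := fun x => U3 x - l1 * U1 x with hwb1_def
  have hwa : ∀ x ∈ Icc (0:ℝ) 1, HasDerivWithinAt wa (wa1 x) (Icc (0:ℝ) 1) x :=
    fun x hx => (hU2 x hx).sub ((hU x hx).const_mul l2)
  have hwb : ∀ x ∈ Icc (0:ℝ) 1, HasDerivWithinAt wb (wb1 x) (Icc (0:ℝ) 1) x :=
    fun x hx => (hU2 x hx).sub ((hU x hx).const_mul l1)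
  have hwa1 : ∀ x ∈ Icc (0:ℝ) 1, HasDerivWithinAt wa1 (l1 * wa x) (Icc (0:ℝ) 1) x := by
    intro x hx
    have h := (hU3 x hx).sub ((hU1 x hx).const_mul l2)
    refine h.congr_deriv ?_
    have hoc := hodeC x hx
    simp only [hwa_def]
    linear_combination -((U2 x) * hsum - (U x) * hprod - hoc)
  have hwb1 : ∀ x ∈ Icc (0:ℝ) 1, HasDerivWithinAt wb1 (l2 * wb x) (Icc (0:ℝ) 1) x := by
    intro x hx
    have h := (hU3 x hx).sub ((hU1 x hx).const_mul l1)
    refine h.congr_deriv ?_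
    have hoc := hodeC x hx
    simp only [hwb_def]
    linear_combination -((U2 x) * hsum - (U x) * hprod - hoc)
  have hU0 : U 0 = 0 := by simp [hU_def, hb0]
  have hU1' : U 1 = 0 := by simp [hU_def, hb1]
  have hU20 : U2 0 = 0 := by simp [hU2_def, hb2]
  have hU21 : U2 1 = 0 := by simp [hU2_def, hb3]
  have hwa0 : wa 0 = 0 := by simp [hwa_def, hU0, hU20]
  have hwa01 : wa 1 = 0 := by simp [hwa_def, hU1', hU21]
  have hwb0 : wb 0 = 0 := by simp [hwb_def, hU0, hU20]
  have hwb01 : wb 1 = 0 := by simp [hwb_def, hU1', hU21]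
  -- helper facts
  have hπC : (π:ℂ) ≠ 0 := Complex.ofReal_ne_zero.mpr Real.pi_ne_zero
  have uzero : (∀ x ∈ Icc (0:ℝ) 1, U x = 0) → (∀ x ∈ Icc (0:ℝ) 1, u x = 0) := by
    intro h x hx
    have := h x hx
    simpa [hU_def] using this
  rcases eq_or_ne d 0 with hd0 | hd0
  · -- double root case : l2 = l1
    have hl12 : l2 = l1 := by rw [hl1_def, hl2_def, hd0]; ring
    rcases ode2_dirichlet l1 s1 hs1 hs10 wa wa1 hwa hwa1 hwa0 hwa01 with hz | ⟨m, hm1, hlam, hC0, hmode⟩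
    · -- wa ≡ 0 : second order equation for U
      have hU2eq : ∀ x ∈ Icc (0:ℝ) 1, U2 x = l1 * U x := by
        intro x hx
        have := hz x hx
        simp only [hwa_def, hl12] at this
        linear_combination this
      have hU1ode : ∀ x ∈ Icc (0:ℝ) 1, HasDerivWithinAt U1 (l1 * U x) (Icc (0:ℝ) 1) x :=
        fun x hx => (hU2eq x hx) ▸ hU1 x hx
      rcases ode2_dirichlet l1 s1 hs1 hs10 U U1 hU hU1ode hU0 hU1' with hz2 | ⟨n, hn1, hlamn, hc0, hmoden⟩
      · exact Or.inl (uzero hz2)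
      · right
        have hnR : ((n:ℝ)^2*π^2) ≠ 0 := by positivity
        have hq : q = -(k/((n:ℝ)^2*π^2) + (n:ℝ)^2*π^2) := by
          have hqc : (q:ℂ) = ((-(k/((n:ℝ)^2*π^2) + (n:ℝ)^2*π^2) : ℝ):ℂ) := by
            push_cast
            rw [← hsum, hl12, hlamn]
            have hkc : (k:ℂ) = ((n:ℂ)^2*(π:ℂ)^2)^2 := by
              rw [← hprod, hl12, hlamn]; ring
            rw [hkc]
            have hnC : ((n:ℂ)^2*(π:ℂ)^2) ≠ 0 := by
              intro h
              rw [h] at hkc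
              exact hkC (by rw [hkc]; ring)
            field_simp
            ring
          exact_mod_cast hqc
        obtain ⟨c, hc, hcm⟩ := mode_real n hn1 u (U1 0 / ((n:ℂ)*π))
          (div_ne_zero hc0 (mul_ne_zero (Nat.cast_ne_zero.mpr (by omega)) hπC)) hmoden
        exact ⟨n, hn1, hq, c, hc, hcm⟩
    · -- resonant forced case : contradiction
      exfalso
      set C : ℂ := wa1 0 / ((m:ℂ)*π) with hC_def
      have hmC : ((m:ℂ)) ≠ 0 := Nat.cast_ne_zero.mpr (by omega)
      have hC : C ≠ 0 := div_ne_zero hC0 (mul_ne_zero hmC hπC)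
      set cc : ℂ := (m:ℂ)*π with hcc_def
      have hcc0 : cc ≠ 0 := mul_ne_zero hmC hπC
      set a : ℂ := -(C/(2*cc)) with ha_def
      have ha0 : a ≠ 0 := by
        simp only [ha_def, neg_ne_zero]
        exact div_ne_zero hC (by simp [hcc0])
      have hCa : -2*a*cc = C := by rw [ha_def]; field_simp
      -- particular solution p x = a x cos(cc x) and its derivatives
      set p : ℝ → ℂ := fun y => a * (y:ℂ) * Complex.cos (cc * y) with hp_def
      set p1 : ℝ → ℂ := fun y => a * Complex.cos (cc * y) - a * cc * (y:ℂ) * Complex.sin (cc * y)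
        with hp1_def
      have hp : ∀ x : ℝ, HasDerivAt p (p1 x) x := by
        intro x
        have he : HasDerivAt (fun z : ℂ => a * z * Complex.cos (cc * z))
            (a * Complex.cos (cc * (x:ℂ)) - a * cc * (x:ℂ) * Complex.sin (cc * (x:ℂ))) (x:ℂ) := by
          have h1 : HasDerivAt (fun z : ℂ => a * z) a (x:ℂ) := by
            simpa using (hasDerivAt_id ((x:ℝ):ℂ)).const_mul a
          have h2 : HasDerivAt (fun z : ℂ => Complex.cos (cc * z))
              (-Complex.sin (cc * (x:ℂ)) * cc) (x:ℂ) := by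
            simpa using ((hasDerivAt_id ((x:ℝ):ℂ)).const_mul cc).ccos
          have := h1.mul h2
          refine this.congr_deriv ?_
          ring
        exact he.comp_ofReal
      have hp1 : ∀ x : ℝ, HasDerivAt p1 (C * Complex.sin (cc * x) + l1 * p x) x := by
        intro x
        have he : HasDerivAt (fun z : ℂ => a * Complex.cos (cc * z) - a * cc * z * Complex.sin (cc * z))
            (C * Complex.sin (cc * (x:ℂ)) + l1 * (a * (x:ℂ) * Complex.cos (cc * (x:ℂ)))) (x:ℂ) := by
          have h2 : HasDerivAt (fun z : ℂ => Complex.cos (cc * z))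
              (-Complex.sin (cc * (x:ℂ)) * cc) (x:ℂ) := by
            simpa using ((hasDerivAt_id ((x:ℝ):ℂ)).const_mul cc).ccos
          have h3 : HasDerivAt (fun z : ℂ => Complex.sin (cc * z))
              (Complex.cos (cc * (x:ℂ)) * cc) (x:ℂ) := by
            simpa using ((hasDerivAt_id ((x:ℝ):ℂ)).const_mul cc).csin
          have h4 : HasDerivAt (fun z : ℂ => a * cc * z) (a * cc) (x:ℂ) := by
            simpa using (hasDerivAt_id ((x:ℝ):ℂ)).const_mul (a * cc)
          have := (h2.const_mul a).sub (h4.mul h3)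
          refine this.congr_deriv ?_
          have hl1cc : l1 = -cc^2 := by rw [hlam, hcc_def]; ring
          rw [hl1cc, ← hCa]
          ring
        exact he.comp_ofReal
      -- h = U - p solves h'' = l1 h
      set h : ℝ → ℂ := fun x => U x - p x with hh_def
      set h1 : ℝ → ℂ := fun x => U1 x - p1 x with hh1_def
      have hhd : ∀ x ∈ Icc (0:ℝ) 1, HasDerivWithinAt h (h1 x) (Icc (0:ℝ) 1) x :=
        fun x hx => (hU x hx).sub (hp x).hasDerivWithinAt
      have hh1d : ∀ x ∈ Icc (0:ℝ) 1, HasDerivWithinAt h1 (s1^2 * h x) (Icc (0:ℝ) 1) x := by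
        intro x hx
        have hder := (hU1 x hx).sub (hp1 x).hasDerivWithinAt
        have hwax : wa x = C * (Real.sin ((m:ℝ)*π*x) : ℂ) := hmode x hx
        have hU2x : U2 x = l1 * U x + C * Complex.sin (cc * x) := by
          have hsin : Complex.sin (cc * (x:ℂ)) = ((Real.sin ((m:ℝ)*π*x) : ℝ):ℂ) := by
            rw [Complex.ofReal_sin, hcc_def]
            push_cast
            ring_nf
          rw [hsin]
          have := hwax
          simp only [hwa_def, hl12] at this
          linear_combination this
        have : U2 x - (C * Complex.sin (cc * x) + l1 * p x) = s1^2 * h x := by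
          rw [hU2x, hs1, hh_def]
          ring
        rw [← this]
        exact hder
      have hrep := ode2_rep s1 hs10 h h1 hhd hh1d
      have hh0 : h 0 = 0 := by simp [hh_def, hU0, hp_def]
      have hsinh1 : Complex.sinh (s1 * (1:ℝ)) = 0 := by
        have hfact : (s1 - cc * Complex.I) * (s1 + cc * Complex.I) = 0 := by
          have : s1^2 = -cc^2 := by rw [hs1, hlam, hcc_def]; ring
          linear_combination this - Complex.I_sq * cc^2
        have hsmπ : Complex.sin ((m:ℝ)*π : ℂ) = 0 := by
          have : (((m:ℝ)*π : ℝ):ℂ) = ((m:ℝ)*π : ℂ) := by push_cast; ring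
          rw [← this, ← Complex.ofReal_sin]
          simp [Real.sin_nat_mul_pi]
        rcases mul_eq_zero.mp hfact with hf | hf
        · have : s1 = cc * Complex.I := by linear_combination hf
          rw [this]
          simp only [Complex.ofReal_one, mul_one]
          rw [hcc_def]
          have harg : (m:ℂ)*(π:ℂ)*Complex.I = (((m:ℝ)*π:ℝ):ℂ) * Complex.I := by push_cast; ring
          rw [harg, Complex.sinh_mul_I, ← Complex.ofReal_sin]
          simp [Real.sin_nat_mul_pi]
        · have : s1 = -(cc * Complex.I) := by linear_combination hf
          rw [this]
          simp only [Complex.ofReal_one, mul_one, Complex.sinh_neg]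
          rw [hcc_def]
          have harg : (m:ℂ)*(π:ℂ)*Complex.I = (((m:ℝ)*π:ℝ):ℂ) * Complex.I := by push_cast; ring
          rw [harg, Complex.sinh_mul_I, ← Complex.ofReal_sin]
          simp [Real.sin_nat_mul_pi]
      have hh1eq : h 1 = 0 := by
        have := hrep 1 (by norm_num)
        rw [hh0, hsinh1] at this
        simpa using this
      -- but h 1 = -p 1 ≠ 0
      have hp1ne : p 1 ≠ 0 := by
        simp only [hp_def, hcc_def]
        have harg : (m:ℂ)*(π:ℂ)*((1:ℝ):ℂ) = (((m:ℝ)*π:ℝ):ℂ) := by push_cast; ring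
        rw [harg, ← Complex.ofReal_cos]
        have hcosne : Real.cos ((m:ℝ)*π) ≠ 0 := by
          intro hcos
          have habs := Real.abs_cos_int_mul_pi (m:ℤ)
          push_cast at habs
          rw [hcos] at habs
          simp at habs
        intro hzero
        rcases mul_eq_zero.mp hzero with hz1 | hz1
        · rcases mul_eq_zero.mp hz1 with hz2 | hz2
          · exact ha0 hz2
          · norm_num at hz2
        · exact hcosne (by exact_mod_cast hz1)
      have hneg : h 1 = -p 1 := by simp [hh_def, hU1']
      rw [hh1eq] at hneg
      exact hp1ne (neg_eq_zero.mp hneg.symm)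
  · -- distinct roots
    have hl12 : l1 ≠ l2 := by
      intro h
      apply hd0
      have hdd : d = l1 - l2 := by rw [hl1_def, hl2_def]; ring
      rw [hdd, h]; ring
    have hdiff : l1 - l2 ≠ 0 := sub_ne_zero.mpr hl12
    have hdiff' : l2 - l1 ≠ 0 := sub_ne_zero.mpr (Ne.symm hl12)
    have hmodecase : ∀ (m : ℕ), 1 ≤ m → ∀ (lother : ℂ), lother * (-((m:ℂ)^2*(π:ℂ)^2)) = (k:ℂ) →
        lother + (-((m:ℂ)^2*(π:ℂ)^2)) = (q:ℂ) →
        ∀ E : ℂ, E ≠ 0 → (∀ x ∈ Icc (0:ℝ) 1, U x = E * ((Real.sin ((m:ℝ)*π*x) : ℝ):ℂ)) →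
        ((∀ x ∈ Icc (0:ℝ) 1, u x = 0) ∨
          ∃ n : ℕ, 1 ≤ n ∧ q = -(k/((n:ℝ)^2*π^2) + (n:ℝ)^2*π^2) ∧
          ∃ c : ℝ, c ≠ 0 ∧ ∀ x ∈ Icc (0:ℝ) 1, u x = c * Real.sin ((n:ℝ)*π*x)) := by
      intro m hm lother hpr hsm E hE hmod
      right
      have hmπ0 : ((m:ℂ)^2*(π:ℂ)^2) ≠ 0 :=
        mul_ne_zero (pow_ne_zero _ (Nat.cast_ne_zero.mpr (by omega))) (pow_ne_zero _ hπC)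
      have hq : q = -(k/((m:ℝ)^2*π^2)+(m:ℝ)^2*π^2) := by
        have hqc : (q:ℂ) = ((-(k/((m:ℝ)^2*π^2)+(m:ℝ)^2*π^2):ℝ):ℂ) := by
          push_cast
          rw [← hsm]
          rw [← hpr]
          field_simp [(Nat.cast_ne_zero.mpr (by omega) : (m:ℂ) ≠ 0)]
          ring
        exact_mod_cast hqc
      obtain ⟨c, hc, hcm⟩ := mode_real m hm u E hE hmod
      exact ⟨m, hm, hq, c, hc, hcm⟩
    rcases ode2_dirichlet l1 s1 hs1 hs10 wa wa1 hwa hwa1 hwa0 hwa01 with hza | ⟨i, hi1, hlami, hCi0, hmodei⟩ <;>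
      rcases ode2_dirichlet l2 s2 hs2 hs20 wb wb1 hwb hwb1 hwb0 hwb01 with hzb | ⟨j, hj1, hlamj, hCj0, hmodej⟩
    · -- both zero
      left
      apply uzero
      intro x hx
      have h1 := hza x hx
      have h2 := hzb x hx
      simp only [hwa_def, hwb_def] at h1 h2
      have h3 : (l1 - l2) * U x = 0 := by linear_combination h1 - h2
      rcases mul_eq_zero.mp h3 with h | h
      · exact absurd h hdiff
      · exact h
    · -- wa ≡ 0, wb is a mode
      set Cb : ℂ := wb1 0/((j:ℂ)*π) with hCb_def
      have hCb : Cb ≠ 0 :=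
        div_ne_zero hCj0 (mul_ne_zero (Nat.cast_ne_zero.mpr (by omega)) hπC)
      refine hmodecase j hj1 l1 (by rw [← hlamj]; exact hprod) (by rw [← hlamj]; exact hsum)
        (Cb / (l2 - l1)) (div_ne_zero hCb hdiff') ?_
      intro x hx
      have h1 := hza x hx
      have h2 := hmodej x hx
      simp only [hwa_def, hwb_def] at h1 h2
      rw [div_mul_eq_mul_div, eq_div_iff hdiff']
      linear_combination h2 - h1
    · -- wa is a mode, wb ≡ 0
      set Ca : ℂ := wa1 0/((i:ℂ)*π) with hCa_def
      have hCa : Ca ≠ 0 :=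
        div_ne_zero hCi0 (mul_ne_zero (Nat.cast_ne_zero.mpr (by omega)) hπC)
      refine hmodecase i hi1 l2 (by rw [← hlami, mul_comm]; exact hprod)
        (by rw [← hlami, add_comm]; exact hsum)
        (Ca / (l1 - l2)) (div_ne_zero hCa hdiff) ?_
      intro x hx
      have h1 := hmodei x hx
      have h2 := hzb x hx
      simp only [hwa_def, hwb_def] at h1 h2
      rw [div_mul_eq_mul_div, eq_div_iff hdiff]
      linear_combination h1 - h2
    · -- both modes : resonance, contradiction
      exfalso
      have hij : i ≠ j := by
        intro h
        apply hl12
        rw [hlami, hlamj, h]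
      have hkr : k = (i:ℝ)^2*(j:ℝ)^2*π^4 := by
        have : (k:ℂ) = (((i:ℝ)^2*(j:ℝ)^2*π^4 : ℝ):ℂ) := by
          push_cast
          rw [← hprod, hlami, hlamj]
          ring
        exact_mod_cast this
      rcases Nat.lt_or_ge i j with hlt | hge
      · exact hres i j hi1 hlt hkr
      · have hlt : j < i := by omega
        exact hres j i hj1 hlt (by rw [hkr]; ring)

notation "II" => Icc (0:ℝ) 1

lemma hII : UniqueDiffOn ℝ II := uniqueDiffOn_Icc_zero_one

/-- nested `derivWithin` computes `iteratedDerivWithin`. -/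
lemma iter_eq_chain (f : ℝ → ℝ) (n : ℕ) :
    EqOn (iteratedDerivWithin n f II)
      ((fun g : ℝ → ℝ => derivWithin g II)^[n] f) II := by
  induction n generalizing f with
  | zero => intro x hx; simp
  | succ n IH =>
    intro x hx
    rw [iteratedDerivWithin_succ', Function.iterate_succ_apply]
    exact IH (derivWithin f II) hx

lemma derivWithin_eqOn {f g : ℝ → ℝ} (hfg : EqOn f g II) (g' : ℝ → ℝ)
    (hg : ∀ x, HasDerivAt g (g' x) x) :
    EqOn (derivWithin f II) g' II := by
  intro x hx
  have h := ((hg x).hasDerivWithinAt.congr (fun y hy => hfg hy) (hfg hx))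
  exact h.derivWithin (hII.uniqueDiffWithinAt hx)

lemma hda_sin_mode (c : ℝ) (n : ℕ) (x : ℝ) :
    HasDerivAt (fun x => c * Real.sin ((n:ℝ)*π*x)) (c*((n:ℝ)*π) * Real.cos ((n:ℝ)*π*x)) x := by
  have h := (((hasDerivAt_id x).const_mul ((n:ℝ)*π)).sin).const_mul c
  simp only [id] at h
  refine h.congr_deriv ?_
  ring
lemma hda_cos_mode (c : ℝ) (n : ℕ) (x : ℝ) :
    HasDerivAt (fun x => c * Real.cos ((n:ℝ)*π*x)) (-(c*((n:ℝ)*π)) * Real.sin ((n:ℝ)*π*x)) x := by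
  have h := (((hasDerivAt_id x).const_mul ((n:ℝ)*π)).cos).const_mul c
  simp only [id] at h
  refine h.congr_deriv ?_
  ring

/-- `∫₀¹ cos²(nπx) dx = 1/2`. -/
lemma integral_cos_sq_mode (n : ℕ) (hn : 1 ≤ n) :
    ∫ x in (0:ℝ)..1, Real.cos ((n:ℝ)*π*x)^2 = 1/2 := by
  have hnπ : ((n:ℝ)*π) ≠ 0 :=
    mul_ne_zero (Nat.cast_ne_zero.mpr (by omega)) Real.pi_ne_zero
  have h := intervalIntegral.integral_comp_mul_left (a := (0:ℝ)) (b := 1)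
    (fun y => Real.cos y ^ 2) hnπ
  simp only [mul_zero, mul_one] at h
  rw [h, integral_cos_sq]
  rw [Real.sin_nat_mul_pi]
  rw [smul_eq_mul]
  field_simp
  simp

lemma integral_iter1 (u : ℝ → ℝ) (c : ℝ) (n : ℕ) (hn : 1 ≤ n)
    (h : EqOn (iteratedDerivWithin 1 u II) (fun x => c*((n:ℝ)*π) * Real.cos ((n:ℝ)*π*x)) II) :
    ∫ ξ in (0:ℝ)..1, (iteratedDerivWithin 1 u II ξ)^2 = c^2*((n:ℝ)^2*π^2)/2 := by
  have heq : ∫ ξ in (0:ℝ)..1, (iteratedDerivWithin 1 u II ξ)^2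
      = ∫ ξ in (0:ℝ)..1, (c*((n:ℝ)*π))^2 * Real.cos ((n:ℝ)*π*ξ)^2 := by
    apply intervalIntegral.integral_congr
    intro ξ hξ
    rw [Set.uIcc_of_le (by norm_num : (0:ℝ) ≤ 1)] at hξ
    show iteratedDerivWithin 1 u II ξ ^ 2 = (c*((n:ℝ)*π))^2 * Real.cos ((n:ℝ)*π*ξ)^2
    rw [h hξ]; ring
  rw [heq, intervalIntegral.integral_const_mul, integral_cos_sq_mode n hn]
  ring

lemma iter1_eq (u : ℝ → ℝ) : EqOn (iteratedDerivWithin 1 u II) (derivWithin u II) II :=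
  iter_eq_chain u 1

lemma iter2_eq (u : ℝ → ℝ) :
    EqOn (iteratedDerivWithin 2 u II) (derivWithin (derivWithin u II) II) II :=
  iter_eq_chain u 2

lemma iter4_eq (u : ℝ → ℝ) :
    EqOn (iteratedDerivWithin 4 u II)
      (derivWithin (derivWithin (derivWithin (derivWithin u II) II) II) II) II :=
  iter_eq_chain u 4

/-- modes (and `0` when `c = 0`) are stationary solutions -/
lemma isStatSol_mode (k β : ℝ) (n : ℕ) (hn : 1 ≤ n) (c : ℝ)
    (hc2 : c = 0 ∨ c^2*((n:ℝ)^2*π^2) = -2*(β + mu k n)) :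
    IsStatSol k β (fun x => c * Real.sin ((n:ℝ)*π*x)) := by
  have hn0 : (0:ℝ) < n := by exact_mod_cast Nat.pos_of_ne_zero (by omega)
  have hnπ2 : ((n:ℝ)^2*π^2) ≠ 0 := by positivity
  set m0 : ℝ → ℝ := fun x => c * Real.sin ((n:ℝ)*π*x) with hm0_def
  set m1 : ℝ → ℝ := fun x => c*((n:ℝ)*π) * Real.cos ((n:ℝ)*π*x) with hm1_def
  set m2 : ℝ → ℝ := fun x => -(c*((n:ℝ)^2*π^2)) * Real.sin ((n:ℝ)*π*x) with hm2_def
  set m3 : ℝ → ℝ := fun x => -(c*((n:ℝ)^3*π^3)) * Real.cos ((n:ℝ)*π*x) with hm3_def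
  set m4 : ℝ → ℝ := fun x => c*((n:ℝ)^4*π^4) * Real.sin ((n:ℝ)*π*x) with hm4_def
  have E1 : EqOn (derivWithin m0 II) m1 II :=
    derivWithin_eqOn (fun x hx => rfl) m1 (hda_sin_mode c n)
  have E2 : EqOn (derivWithin (derivWithin m0 II) II) m2 II := by
    apply derivWithin_eqOn E1 m2
    intro x
    have h := hda_cos_mode (c*((n:ℝ)*π)) n x
    have he : -(c*((n:ℝ)*π)*((n:ℝ)*π)) = -(c*((n:ℝ)^2*π^2)) := by ring
    rw [he] at h
    exact h
  have E3 : EqOn (derivWithin (derivWithin (derivWithin m0 II) II) II) m3 II := by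
    apply derivWithin_eqOn E2 m3
    intro x
    have h := hda_sin_mode (-(c*((n:ℝ)^2*π^2))) n x
    have he : -(c*((n:ℝ)^2*π^2))*((n:ℝ)*π) = -(c*((n:ℝ)^3*π^3)) := by ring
    rw [he] at h
    exact h
  have E4 : EqOn (derivWithin (derivWithin (derivWithin (derivWithin m0 II) II) II) II) m4 II := by
    apply derivWithin_eqOn E3 m4
    intro x
    have h := hda_cos_mode (-(c*((n:ℝ)^3*π^3))) n x
    have he : -(-(c*((n:ℝ)^3*π^3))*((n:ℝ)*π)) = c*((n:ℝ)^4*π^4) := by ring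
    rw [he] at h
    exact h
  have hi1 : ∀ x ∈ II, iteratedDerivWithin 1 m0 II x = m1 x :=
    fun x hx => (iter1_eq m0 hx).trans (E1 hx)
  have hi2 : ∀ x ∈ II, iteratedDerivWithin 2 m0 II x = m2 x :=
    fun x hx => (iter2_eq m0 hx).trans (E2 hx)
  have hi4 : ∀ x ∈ II, iteratedDerivWithin 4 m0 II x = m4 x :=
    fun x hx => (iter4_eq m0 hx).trans (E4 hx)
  have hint : ∫ ξ in (0:ℝ)..1, (iteratedDerivWithin 1 m0 II ξ)^2 = c^2*((n:ℝ)^2*π^2)/2 :=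
    integral_iter1 m0 c n hn (fun x hx => (iter1_eq m0 hx).trans (E1 hx))
  have hcd : ContDiffOn ℝ 4 m0 II := by
    apply ContDiff.contDiffOn
    exact contDiff_const.mul ((contDiff_const.mul contDiff_id).sin)
  have hsin0 : Real.sin ((n:ℝ)*π*0) = 0 := by rw [mul_zero, Real.sin_zero]
  have hsin1 : Real.sin ((n:ℝ)*π*1) = 0 := by rw [mul_one, Real.sin_nat_mul_pi]
  refine ⟨hcd, ?_, ?_, ?_, ?_, ?_⟩
  · intro x hx
    rw [hi4 x hx, hi2 x hx, hint]
    rcases hc2 with hc | hc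
    · simp [hm4_def, hm2_def, hm0_def, hc]
    · have hμ : β + c^2*((n:ℝ)^2*π^2)/2 = -(mu k n) := by linarith
      rw [hμ, hm4_def, hm2_def, hm0_def, mu]
      field_simp
      ring
  · simp [hm0_def, hsin0]
  · simp [hm0_def, hsin1]
  · rw [hi2 0 (by norm_num), hm2_def]; simp [hsin0]
  · rw [hi2 1 (by norm_num), hm2_def]; simp [hsin1]

lemma isStatSol_congr {k β : ℝ} {u v : ℝ → ℝ} (huv : EqOn u v II) (h : IsStatSol k β v) :
    IsStatSol k β u := by
  obtain ⟨hcd, hode, hb0, hb1, hb20, hb21⟩ := h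
  have h0 : (0:ℝ) ∈ II := by norm_num
  have h1 : (1:ℝ) ∈ II := by norm_num
  have hiter : ∀ m : ℕ, ∀ x ∈ II,
      iteratedDerivWithin m u II x = iteratedDerivWithin m v II x :=
    fun m x hx => iteratedDerivWithin_congr huv hx
  refine ⟨hcd.congr huv, ?_, (huv h0).trans hb0, (huv h1).trans hb1,
    (hiter 2 0 h0).trans hb20, (hiter 2 1 h1).trans hb21⟩
  intro x hx
  have hint : (∫ ξ in (0:ℝ)..1, (iteratedDerivWithin 1 u II ξ)^2)
      = ∫ ξ in (0:ℝ)..1, (iteratedDerivWithin 1 v II ξ)^2 := by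
    apply intervalIntegral.integral_congr
    intro ξ hξ
    rw [Set.uIcc_of_le (by norm_num : (0:ℝ) ≤ 1)] at hξ
    show iteratedDerivWithin 1 u II ξ ^ 2 = iteratedDerivWithin 1 v II ξ ^ 2
    rw [hiter 1 ξ hξ]
  rw [hiter 4 x hx, hiter 2 x hx, huv hx, hint]
  exact hode x hx

lemma forward (k β : ℝ) (hk : 0 < k)
    (hres : ∀ i j : ℕ, 1 ≤ i → i < j → k ≠ (i:ℝ)^2*(j:ℝ)^2*π^4)
    (u : ℝ → ℝ) (hsol : IsStatSol k β u) :
    EqOn u 0 II ∨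
      ∃ n : ℕ, 1 ≤ n ∧ β + mu k n < 0 ∧
        (EqOn u (upos k β n) II ∨ EqOn u (uneg k β n) II) := by
  obtain ⟨hcd, hode, hb0, hb1, hb20, hb21⟩ := hsol
  have hcd1 : ContDiffOn ℝ 3 (derivWithin u II) II := hcd.derivWithin hII (by norm_num)
  have hcd2 : ContDiffOn ℝ 2 (derivWithin (derivWithin u II) II) II :=
    hcd1.derivWithin hII (by norm_num)
  have hcd3 : ContDiffOn ℝ 1 (derivWithin (derivWithin (derivWithin u II) II) II) II :=
    hcd2.derivWithin hII (by norm_num)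
  have hu : ∀ x ∈ II, HasDerivWithinAt u (derivWithin u II x) II x :=
    fun x hx => ((hcd.differentiableOn (by norm_num)) x hx).hasDerivWithinAt
  have hu1 : ∀ x ∈ II, HasDerivWithinAt (derivWithin u II)
      (derivWithin (derivWithin u II) II x) II x :=
    fun x hx => ((hcd1.differentiableOn (by norm_num)) x hx).hasDerivWithinAt
  have hu2 : ∀ x ∈ II, HasDerivWithinAt (derivWithin (derivWithin u II) II)
      (derivWithin (derivWithin (derivWithin u II) II) II x) II x :=
    fun x hx => ((hcd2.differentiableOn (by norm_num)) x hx).hasDerivWithinAt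
  have hu3 : ∀ x ∈ II, HasDerivWithinAt (derivWithin (derivWithin (derivWithin u II) II) II)
      (derivWithin (derivWithin (derivWithin (derivWithin u II) II) II) II x) II x :=
    fun x hx => ((hcd3.differentiableOn (by norm_num)) x hx).hasDerivWithinAt
  set q : ℝ := β + ∫ ξ in (0:ℝ)..1, (iteratedDerivWithin 1 u II ξ)^2 with hq_def
  have hodeq : ∀ x ∈ II,
      derivWithin (derivWithin (derivWithin (derivWithin u II) II) II) II x
        = q * derivWithin (derivWithin u II) II x - k * u x := by
    intro x hx
    have h := hode x hx
    rw [iter4_eq u hx, iter2_eq u hx] at h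
    linarith
  have h0 : (0:ℝ) ∈ II := by norm_num
  have h1 : (1:ℝ) ∈ II := by norm_num
  have hb20' : derivWithin (derivWithin u II) II 0 = 0 := (iter2_eq u h0).symm.trans hb20
  have hb21' : derivWithin (derivWithin u II) II 1 = 0 := (iter2_eq u h1).symm.trans hb21
  rcases classify k q hk hres u _ _ _ _ hu hu1 hu2 hu3 hodeq hb0 hb1 hb20' hb21' with
    hz | ⟨n, hn, hqmu, c, hc0, hmode⟩
  · left
    intro x hx
    exact hz x hx
  · right
    have hn0 : (0:ℝ) < n := by exact_mod_cast Nat.pos_of_ne_zero (by omega)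
    have hπ0 : (0:ℝ) < π := Real.pi_pos
    have hnπ : ((n:ℝ)*π) ≠ 0 := by positivity
    have hE1 : EqOn (derivWithin u II) (fun x => c*((n:ℝ)*π) * Real.cos ((n:ℝ)*π*x)) II :=
      derivWithin_eqOn (fun x hx => hmode x hx) _ (hda_sin_mode c n)
    have hint := integral_iter1 u c n hn (fun x hx => (iter1_eq u hx).trans (hE1 hx))
    have hqval : q = β + c^2*((n:ℝ)^2*π^2)/2 := by rw [hq_def, hint]
    have hqmu' : q = -(mu k n) := by rw [hqmu, mu]
    have hc2 : c^2*((n:ℝ)^2*π^2) = -2*(β + mu k n) := by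
      have := hqval.symm.trans hqmu'
      linarith
    have hcpos : 0 < c^2 := by rcases lt_or_gt_of_ne hc0 with h | h <;> nlinarith
    have hnn : (0:ℝ) < (n:ℝ)^2*π^2 := by positivity
    have hlt : β + mu k n < 0 := by nlinarith
    refine ⟨n, hn, hlt, ?_⟩
    have hsq : -2*(β + mu k n) = (c*((n:ℝ)*π))^2 := by rw [← hc2]; ring
    have hs : Real.sqrt (-2*(β + mu k n)) = |c*((n:ℝ)*π)| := by
      rw [hsq, Real.sqrt_sq_eq_abs]
    rcases abs_cases (c*((n:ℝ)*π)) with ⟨habs, _⟩ | ⟨habs, _⟩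
    · left
      intro x hx
      rw [hmode x hx]
      show c * Real.sin ((n:ℝ)*π*x)
        = (1/((n:ℝ)*π)) * Real.sqrt (-2*(β + mu k n)) * Real.sin ((n:ℝ)*π*x)
      rw [hs, habs]
      field_simp
    · right
      intro x hx
      rw [hmode x hx]
      show c * Real.sin ((n:ℝ)*π*x)
        = -(1/((n:ℝ)*π)) * Real.sqrt (-2*(β + mu k n)) * Real.sin ((n:ℝ)*π*x)
      rw [hs, habs]
      field_simp

lemma isStatSol_zero (k β : ℝ) : IsStatSol k β (fun _ : ℝ => (0:ℝ)) := by
  apply isStatSol_congr (v := fun x => (0:ℝ) * Real.sin ((1:ℕ):ℝ)*π*x)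
  · intro x hx; simp
  · have := isStatSol_mode k β 1 le_rfl 0 (Or.inl rfl)
    apply isStatSol_congr (v := fun x => (0:ℝ) * Real.sin (((1:ℕ):ℝ)*π*x)) _ this
    intro x hx; simp

lemma isStatSol_upos (k β : ℝ) (n : ℕ) (hn : 1 ≤ n) (hlt : β + mu k n < 0) :
    IsStatSol k β (upos k β n) := by
  have hn0 : (0:ℝ) < n := by exact_mod_cast Nat.pos_of_ne_zero (by omega)
  have hπ0 : (0:ℝ) < π := Real.pi_pos
  set c : ℝ := (1/((n:ℝ)*π)) * Real.sqrt (-2*(β + mu k n)) with hc_def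
  have hc2 : c^2*((n:ℝ)^2*π^2) = -2*(β + mu k n) := by
    rw [hc_def, mul_pow, Real.sq_sqrt (by linarith)]
    field_simp
  have := isStatSol_mode k β n hn c (Or.inr hc2)
  apply isStatSol_congr _ this
  intro x hx
  rfl

lemma isStatSol_uneg (k β : ℝ) (n : ℕ) (hn : 1 ≤ n) (hlt : β + mu k n < 0) :
    IsStatSol k β (uneg k β n) := by
  have hn0 : (0:ℝ) < n := by exact_mod_cast Nat.pos_of_ne_zero (by omega)
  have hπ0 : (0:ℝ) < π := Real.pi_pos
  set c : ℝ := -(1/((n:ℝ)*π)) * Real.sqrt (-2*(β + mu k n)) with hc_def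
  have hc2 : c^2*((n:ℝ)^2*π^2) = -2*(β + mu k n) := by
    rw [hc_def, mul_pow, Real.sq_sqrt (by linarith)]
    field_simp
  have := isStatSol_mode k β n hn c (Or.inr hc2)
  apply isStatSol_congr _ this
  intro x hx
  rfl

lemma derivWithin_mode_zero (c : ℝ) (n : ℕ) :
    derivWithin (fun x => c * Real.sin ((n:ℝ)*π*x)) II 0 = c * ((n:ℝ)*π) := by
  have h0 : (0:ℝ) ∈ II := by norm_num
  have := derivWithin_eqOn (f := fun x => c * Real.sin ((n:ℝ)*π*x))
    (g := fun x => c * Real.sin ((n:ℝ)*π*x)) (fun x hx => rfl) _ (hda_sin_mode c n) h0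
  rw [this]
  simp

lemma derivWithin_upos_zero (k β : ℝ) (n : ℕ) (hn : 1 ≤ n) :
    derivWithin (upos k β n) II 0 = Real.sqrt (-2*(β + mu k n)) := by
  have hn0 : (0:ℝ) < n := by exact_mod_cast Nat.pos_of_ne_zero (by omega)
  have hπ0 : (0:ℝ) < π := Real.pi_pos
  have h := derivWithin_mode_zero ((1/((n:ℝ)*π)) * Real.sqrt (-2*(β + mu k n))) n
  have hfun : upos k β n = fun x => ((1/((n:ℝ)*π)) * Real.sqrt (-2*(β + mu k n))) * Real.sin ((n:ℝ)*π*x) := rfl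
  rw [hfun, h]
  field_simp

lemma derivWithin_uneg_zero (k β : ℝ) (n : ℕ) (hn : 1 ≤ n) :
    derivWithin (uneg k β n) II 0 = -Real.sqrt (-2*(β + mu k n)) := by
  have hn0 : (0:ℝ) < n := by exact_mod_cast Nat.pos_of_ne_zero (by omega)
  have hπ0 : (0:ℝ) < π := Real.pi_pos
  have h := derivWithin_mode_zero (-(1/((n:ℝ)*π)) * Real.sqrt (-2*(β + mu k n))) n
  have hfun : uneg k β n = fun x => (-(1/((n:ℝ)*π)) * Real.sqrt (-2*(β + mu k n))) * Real.sin ((n:ℝ)*π*x) := rfl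
  rw [hfun, h]
  field_simp

lemma derivWithin_zero_fun : derivWithin (0 : ℝ → ℝ) II 0 = 0 := by
  have h0 : (0:ℝ) ∈ II := by norm_num
  exact congrFun (derivWithin_const II (0:ℝ)) 0

lemma mu_inj (k : ℝ) (hk : 0 < k)
    (hres : ∀ i j : ℕ, 1 ≤ i → i < j → k ≠ (i:ℝ)^2*(j:ℝ)^2*π^4)
    (n m : ℕ) (hn : 1 ≤ n) (hm : 1 ≤ m) (hmu : mu k n = mu k m) : n = m := by
  by_contra hne
  have hn0 : (0:ℝ) < n := by exact_mod_cast Nat.pos_of_ne_zero (by omega)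
  have hm0 : (0:ℝ) < m := by exact_mod_cast Nat.pos_of_ne_zero (by omega)
  have hπ0 : (0:ℝ) < π := Real.pi_pos
  have hnm : ((n:ℝ))^2 ≠ ((m:ℝ))^2 := by
    intro h
    have : (n:ℝ) = (m:ℝ) := by nlinarith
    exact hne (by exact_mod_cast this)
  rw [mu, mu] at hmu
  have hn2 : ((n:ℝ)^2*π^2) ≠ 0 := by positivity
  have hm2 : ((m:ℝ)^2*π^2) ≠ 0 := by positivity
  field_simp at hmu
  have hfac' : (((m:ℝ)^2 - (n:ℝ)^2) * (k - (n:ℝ)^2*(m:ℝ)^2*π^4)) * π^2 = 0 := by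
    linear_combination π^2 * hmu
  have hfac : ((m:ℝ)^2 - (n:ℝ)^2) * (k - (n:ℝ)^2*(m:ℝ)^2*π^4) = 0 := by
    rcases mul_eq_zero.mp hfac' with h | h
    · exact h
    · exact absurd h (by positivity)
  rcases mul_eq_zero.mp hfac with h | h
  · exact hnm (by linarith)
  · have hkr : k = (n:ℝ)^2*(m:ℝ)^2*π^4 := by linarith
    rcases Nat.lt_or_ge n m with hlt | hge
    · exact hres n m hn hlt hkr
    · have hlt : m < n := by omega
      exact hres m n hm hlt (by rw [hkr]; ring)

lemma nset_finite (k β : ℝ) (hk : 0 < k) : {n : ℕ | 1 ≤ n ∧ β + mu k n < 0}.Finite := by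
  apply Set.Finite.subset (Set.finite_Iic (⌈-β/π^2⌉₊))
  rintro n ⟨hn1, hlt⟩
  have hn0 : (0:ℝ) < n := by exact_mod_cast Nat.pos_of_ne_zero (by omega)
  have hπ0 : (0:ℝ) < π := Real.pi_pos
  have hkpos : 0 < k / ((n:ℝ)^2*π^2) := by positivity
  rw [mu] at hlt
  have h1 : (n:ℝ)^2*π^2 < -β := by linarith
  have hge1 : (1:ℝ) ≤ (n:ℝ) := by exact_mod_cast hn1
  have h2 : (n:ℝ) ≤ (n:ℝ)^2 := by nlinarith
  have h3 : (n:ℝ) ≤ -β/π^2 := by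
    rw [le_div_iff₀ (by positivity)]
    nlinarith
  simp only [Set.mem_Iic]
  calc n = ⌈((n:ℝ))⌉₊ := (Nat.ceil_natCast n).symm
  _ ≤ ⌈-β/π^2⌉₊ := Nat.ceil_mono h3

theorem stmt2' (k β : ℝ) (hk : 0 < k)
    (hres : ∀ i j : ℕ, 1 ≤ i → i < j → k ≠ (i : ℝ)^2 * (j : ℝ)^2 * π^4)
    (hβ : β < -betaC k) :
    (∀ u : ℝ → ℝ, IsStatSol k β u ↔
      (EqOn u 0 (Icc (0:ℝ) 1) ∨
        ∃ n : ℕ, 1 ≤ n ∧ β + mu k n < 0 ∧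
          (EqOn u (upos k β n) (Icc (0:ℝ) 1) ∨ EqOn u (uneg k β n) (Icc (0:ℝ) 1)))) ∧
    {n : ℕ | 1 ≤ n ∧ β + mu k n < 0}.Finite ∧
    {g : Icc (0:ℝ) 1 → ℝ |
        ∃ u : ℝ → ℝ, IsStatSol k β u ∧ ∀ x : Icc (0:ℝ) 1, g x = u x}.ncard
      = 2 * {n : ℕ | 1 ≤ n ∧ β + mu k n < 0}.ncard + 1 := by
  have hπ0 : (0:ℝ) < π := Real.pi_pos
  have h0mem : (0:ℝ) ∈ II := by norm_num
  have hiff : ∀ u : ℝ → ℝ, IsStatSol k β u ↔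
      (EqOn u 0 II ∨
        ∃ n : ℕ, 1 ≤ n ∧ β + mu k n < 0 ∧
          (EqOn u (upos k β n) II ∨ EqOn u (uneg k β n) II)) := by
    intro u
    constructor
    · exact forward k β hk hres u
    · rintro (hz | ⟨n, hn, hlt, hcase⟩)
      · exact isStatSol_congr hz (isStatSol_zero k β)
      · rcases hcase with h | h
        · exact isStatSol_congr h (isStatSol_upos k β n hn hlt)
        · exact isStatSol_congr h (isStatSol_uneg k β n hn hlt)
  have hfin : {n : ℕ | 1 ≤ n ∧ β + mu k n < 0}.Finite := nset_finite k β hk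
  refine ⟨hiff, hfin, ?_⟩
  set N : Set ℕ := {n : ℕ | 1 ≤ n ∧ β + mu k n < 0} with hN_def
  set r : (ℝ → ℝ) → (Icc (0:ℝ) 1 → ℝ) := fun u x => u ↑x with hr_def
  have hrEqOn : ∀ f g : ℝ → ℝ, r f = r g → EqOn f g II :=
    fun f g h x hx => congrFun h ⟨x, hx⟩
  have hrd : ∀ f g : ℝ → ℝ, r f = r g → derivWithin f II 0 = derivWithin g II 0 := by
    intro f g h
    exact derivWithin_congr (hrEqOn f g h) (hrEqOn f g h h0mem)
  have hsqpos : ∀ n ∈ N, 0 < Real.sqrt (-2*(β + mu k n)) := by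
    intro n hn
    exact Real.sqrt_pos.mpr (by have := hn.2; linarith)
  have hsq_inj : ∀ n ∈ N, ∀ m ∈ N,
      Real.sqrt (-2*(β + mu k n)) = Real.sqrt (-2*(β + mu k m)) → n = m := by
    intro n hn m hm h
    have h1 := Real.sq_sqrt (show (0:ℝ) ≤ -2*(β + mu k n) by have := hn.2; linarith)
    have h2 := Real.sq_sqrt (show (0:ℝ) ≤ -2*(β + mu k m) by have := hm.2; linarith)
    have : -2*(β+mu k n) = -2*(β+mu k m) := by rw [← h1, ← h2, h]
    exact mu_inj k hk hres n m hn.1 hm.1 (by linarith)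
  -- identification of the solution set
  have hSeq : {g : Icc (0:ℝ) 1 → ℝ |
        ∃ u : ℝ → ℝ, IsStatSol k β u ∧ ∀ x : Icc (0:ℝ) 1, g x = u x}
      = insert (r 0) ((fun n => r (upos k β n)) '' N ∪ (fun n => r (uneg k β n)) '' N) := by
    ext g
    simp only [Set.mem_insert_iff, Set.mem_union, Set.mem_image, Set.mem_setOf_eq]
    constructor
    · rintro ⟨u, hsol, hgu⟩
      have hg : g = r u := funext hgu
      rcases (hiff u).mp hsol with hz | ⟨n, hn, hlt, hc⟩
      · left
        rw [hg]; funext x; exact hz x.2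
      · rcases hc with h | h
        · exact Or.inr (Or.inl ⟨n, ⟨hn, hlt⟩, by rw [hg]; funext x; exact (h x.2).symm⟩)
        · exact Or.inr (Or.inr ⟨n, ⟨hn, hlt⟩, by rw [hg]; funext x; exact (h x.2).symm⟩)
    · rintro (hg | ⟨n, hn, hg⟩ | ⟨n, hn, hg⟩)
      · exact ⟨0, (hiff 0).mpr (Or.inl (fun x hx => rfl)), fun x => by rw [hg]⟩
      · exact ⟨upos k β n, (hiff _).mpr (Or.inr ⟨n, hn.1, hn.2, Or.inl (fun x hx => rfl)⟩),
          fun x => by rw [← hg]⟩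
      · exact ⟨uneg k β n, (hiff _).mpr (Or.inr ⟨n, hn.1, hn.2, Or.inr (fun x hx => rfl)⟩),
          fun x => by rw [← hg]⟩
  rw [hSeq]
  -- distinctness
  have hinjp : Set.InjOn (fun n => r (upos k β n)) N := by
    intro n hn m hm h
    have hd := hrd _ _ h
    rw [derivWithin_upos_zero k β n hn.1, derivWithin_upos_zero k β m hm.1] at hd
    exact hsq_inj n hn m hm hd
  have hinjn : Set.InjOn (fun n => r (uneg k β n)) N := by
    intro n hn m hm h
    have hd := hrd _ _ h
    rw [derivWithin_uneg_zero k β n hn.1, derivWithin_uneg_zero k β m hm.1] at hd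
    exact hsq_inj n hn m hm (by linarith)
  have hdisj : Disjoint ((fun n => r (upos k β n)) '' N) ((fun n => r (uneg k β n)) '' N) := by
    rw [Set.disjoint_left]
    rintro g ⟨n, hn, hgn⟩ ⟨m, hm, hgm⟩
    have hd := hrd _ _ (hgn.trans hgm.symm)
    rw [derivWithin_upos_zero k β n hn.1, derivWithin_uneg_zero k β m hm.1] at hd
    have := hsqpos n hn
    have := hsqpos m hm
    linarith
  have hnotin : r 0 ∉ ((fun n => r (upos k β n)) '' N ∪ (fun n => r (uneg k β n)) '' N) := by
    rintro (⟨n, hn, hgn⟩ | ⟨n, hn, hgn⟩)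
    · have hd := hrd _ _ hgn
      rw [derivWithin_upos_zero k β n hn.1, derivWithin_zero_fun] at hd
      have := hsqpos n hn
      linarith
    · have hd := hrd _ _ hgn
      rw [derivWithin_uneg_zero k β n hn.1, derivWithin_zero_fun] at hd
      have := hsqpos n hn
      linarith
  have hfp : ((fun n => r (upos k β n)) '' N).Finite := hfin.image _
  have hfn : ((fun n => r (uneg k β n)) '' N).Finite := hfin.image _
  rw [Set.ncard_insert_of_notMem hnotin (hfp.union hfn),
    Set.ncard_union_eq hdisj hfp hfn,
    Set.ncard_image_of_injOn hinjp, Set.ncard_image_of_injOn hinjn]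
  ring

/-- For non-resonant `k` and `β < -β_c(k)`, the stationary solutions are exactly
the null solution and the buckled modes `u_n^±` with `β + μ_n(k) < 0`; in
particular there are exactly `2 n⋆(β) + 1` of them. -/
theorem stmt2 (k β : ℝ) (hk : 0 < k)
    (hres : ∀ i j : ℕ, 1 ≤ i → i < j → k ≠ (i : ℝ)^2 * (j : ℝ)^2 * π^4)
    (hβ : β < -betaC k) :
    (∀ u : ℝ → ℝ, IsStatSol k β u ↔
      (EqOn u 0 (Icc (0:ℝ) 1) ∨
        ∃ n : ℕ, 1 ≤ n ∧ β + mu k n < 0 ∧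
          (EqOn u (upos k β n) (Icc (0:ℝ) 1) ∨ EqOn u (uneg k β n) (Icc (0:ℝ) 1)))) ∧
    {n : ℕ | 1 ≤ n ∧ β + mu k n < 0}.Finite ∧
    {g : Icc (0:ℝ) 1 → ℝ |
        ∃ u : ℝ → ℝ, IsStatSol k β u ∧ ∀ x : Icc (0:ℝ) 1, g x = u x}.ncard
      = 2 * {n : ℕ | 1 ≤ n ∧ β + mu k n < 0}.ncard + 1 := stmt2' k β hk hres hβ
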